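/- Let ρ be the qubit density matrix with Bloch parameters (n, θ, φ), 0 ≤ n ≤ 1, 0 ≤ θ ≤ π/2, with 1 + n cosθ > 0. Let θ₄ = arccos[(1 + 2n cosθ + n² cos 2θ)/(1 + n² + 2n cosθ)], and define ψ₁ = (0, 1)ᵀ with p₁ = (1 − n²)/(2(1 + n cosθ)) and ψ₂ = (cos(θ₄/2), e^{iφ} sin(θ₄/2))ᵀ with p₂ = (1 + n² + 2n cosθ)/(2(1 + n cosθ)). Then p₁, p₂ ≥ 0, p₁ + p₂ = 1, ρ = p₁ ψ₁ψ₁* + p₂ ψ₂ψ₂*, and for every symmetric concave f on Ω₂ with f(1, 0) = 0, the average coherence of this decomposition D^(m₂) equals p₂ · f(cos²(θ₄/2), sin²(θ₄/2)). -/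

import Mathlib

open Matrix BigOperators
open scoped ComplexOrder

noncomputable section

/-- A symmetric function: invariant under all coordinate permutations. -/
def SymmetricFn {n : ℕ} (f : (Fin n → ℝ) → ℝ) : Prop :=
  ∀ (σ : Equiv.Perm (Fin n)) (x : Fin n → ℝ), f (x ∘ σ) = f x

/-- A density matrix: positive semidefinite with trace one. -/
def IsDensityMatrix {n : ℕ} (ρ : Matrix (Fin n) (Fin n) ℂ) : Prop :=
  ρ.PosSemidef ∧ ρ.trace = 1

/-- The rank-one projection `ψ ψ*` associated to a vector `ψ ∈ ℂⁿ`. -/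
def outer {n : ℕ} (ψ : Fin n → ℂ) : Matrix (Fin n) (Fin n) ℂ :=
  Matrix.vecMulVec ψ (fun i => starRingEnd ℂ (ψ i))

/-- `(p, ψ)` is a pure state decomposition of `ρ`. -/
def IsDecomposition {n m : ℕ} (ρ : Matrix (Fin n) (Fin n) ℂ)
    (p : Fin m → ℝ) (ψ : Fin m → Fin n → ℂ) : Prop :=
  (∀ k, 0 ≤ p k) ∧ (∑ k, p k = 1) ∧ (∀ k, ∑ i, ‖ψ k i‖ ^ 2 = 1) ∧
    ρ = ∑ k, (p k : ℂ) • outer (ψ k)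

/-- The coherence vector `(|ψ₀|², …, |ψ_{n-1}|²)` of a vector `ψ`. -/
def cohVec {n : ℕ} (ψ : Fin n → ℂ) : Fin n → ℝ := fun i => ‖ψ i‖ ^ 2

/-- The average coherence of a pure state decomposition with respect to `f`. -/
def avgCoh {n m : ℕ} (f : (Fin n → ℝ) → ℝ) (p : Fin m → ℝ)
    (ψ : Fin m → Fin n → ℂ) : ℝ :=
  ∑ k, p k * f (cohVec (ψ k))


/-- The Pauli matrices. -/
def pauli1 : Matrix (Fin 2) (Fin 2) ℂ := !![0, 1; 1, 0]
def pauli2 : Matrix (Fin 2) (Fin 2) ℂ := !![0, -Complex.I; Complex.I, 0]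
def pauli3 : Matrix (Fin 2) (Fin 2) ℂ := !![1, 0; 0, -1]

/-- The qubit density matrix with Bloch parameters `(r, θ, φ)`:
`ρ = (1/2)(I + r sinθ cosφ σ₁ + r sinθ sinφ σ₂ + r cosθ σ₃)`. -/
def bloch (r θ φ : ℝ) : Matrix (Fin 2) (Fin 2) ℂ :=
  (1 / 2 : ℂ) • ((1 : Matrix (Fin 2) (Fin 2) ℂ)
    + (r * Real.sin θ * Real.cos φ) • pauli1
    + (r * Real.sin θ * Real.sin φ) • pauli2
    + (r * Real.cos θ) • pauli3)

/-- The decomposition `D^(m₂)` of a qubit state with Bloch parameters `(n, θ, φ)`: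
with `θ₄ = arccos[(1 + 2n cosθ + n² cos 2θ)/(1 + n² + 2n cosθ)]`, the states
`ψ₁ = (0, 1)` and `ψ₂ = (cos(θ₄/2), e^{iφ} sin(θ₄/2))` with the indicated weights
decompose `ρ`, and for every symmetric concave `f` with `f(1,0) = 0` the average
coherence of this decomposition equals `p₂ · f(cos²(θ₄/2), sin²(θ₄/2))`. -/
lemma Dm2_mat_eq (n θ φ p₁ p₂ a b : ℝ)
    (hA : p₂ * a ^ 2 = (1 + n * Real.cos θ) / 2)
    (hB : p₁ + p₂ * b ^ 2 = (1 - n * Real.cos θ) / 2)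
    (hC : p₂ * (a * b) = n * Real.sin θ / 2) :
    bloch n θ φ = (p₁ : ℂ) • outer ![0, 1]
      + (p₂ : ℂ) • outer ![(a : ℂ), Complex.exp (Complex.I * φ) * (b : ℂ)] := by
  have hexp : Complex.exp (Complex.I * φ) =
      (Real.cos φ : ℂ) + (Real.sin φ : ℂ) * Complex.I := by
    rw [mul_comm, Complex.exp_mul_I]; norm_cast
  have hA' := congrArg (Complex.ofReal) hA
  have hB' := congrArg (Complex.ofReal) hB
  have hC' := congrArg (Complex.ofReal) hC
  have hφ := congrArg (Complex.ofReal) (Real.cos_sq_add_sin_sq φ)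
  push_cast at hA' hB' hC' hφ
  ext i j
  fin_cases i <;> fin_cases j <;>
    · simp only [bloch, pauli1, pauli2, pauli3, outer, Matrix.vecMulVec_apply,
        Matrix.add_apply, Matrix.smul_apply, Matrix.one_apply, Matrix.cons_val_zero,
        Matrix.cons_val_one, Matrix.head_cons, Matrix.cons_val', Matrix.empty_val',
        Matrix.cons_val_fin_one, Matrix.of_apply, Fin.mk_zero, Fin.mk_one,
        smul_eq_mul, hexp, _root_.map_mul, _root_.map_add, Complex.conj_ofReal,
        Complex.conj_I, _root_.map_zero, _root_.map_one, Complex.real_smul,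
        Complex.ofReal_mul]
      norm_num
      push_cast
      try linear_combination -hA'
      try linear_combination -(Complex.cos (φ:ℂ) - Complex.sin (φ:ℂ)*Complex.I) * hC'
      try linear_combination -(Complex.cos (φ:ℂ) + Complex.sin (φ:ℂ)*Complex.I) * hC'
      try linear_combination -hB' - (p₂:ℂ)*(b:ℂ)^2*hφ + (p₂:ℂ)*(b:ℂ)^2*(Complex.sin (φ:ℂ))^2*Complex.I_sq

set_option maxHeartbeats 1000000 in
theorem decomposition_Dm2 (n θ φ : ℝ)
    (hn0 : 0 ≤ n) (hn1 : n ≤ 1) (hθ0 : 0 ≤ θ) (hθ1 : θ ≤ Real.pi / 2)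
    (hpos : 0 < 1 + n * Real.cos θ) :
    let ρ := bloch n θ φ
    let θ₄ := Real.arccos ((1 + 2 * n * Real.cos θ + n ^ 2 * Real.cos (2 * θ)) /
      (1 + n ^ 2 + 2 * n * Real.cos θ))
    let ψ₁ : Fin 2 → ℂ := ![0, 1]
    let ψ₂ : Fin 2 → ℂ :=
      ![(Real.cos (θ₄ / 2) : ℂ),
        Complex.exp (Complex.I * φ) * (Real.sin (θ₄ / 2) : ℂ)]
    let p₁ : ℝ := (1 - n ^ 2) / (2 * (1 + n * Real.cos θ))
    let p₂ : ℝ := (1 + n ^ 2 + 2 * n * Real.cos θ) / (2 * (1 + n * Real.cos θ))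
    (0 ≤ p₁ ∧ 0 ≤ p₂) ∧ p₁ + p₂ = 1 ∧
    ρ = (p₁ : ℂ) • outer ψ₁ + (p₂ : ℂ) • outer ψ₂ ∧
    ∀ f : (Fin 2 → ℝ) → ℝ, SymmetricFn f → ConcaveOn ℝ (stdSimplex ℝ (Fin 2)) f →
      f ![1, 0] = 0 →
      p₁ * f (cohVec ψ₁) + p₂ * f (cohVec ψ₂) =
        p₂ * f ![Real.cos (θ₄ / 2) ^ 2, Real.sin (θ₄ / 2) ^ 2] := by
  
  intro ρ θ₄ ψ₁ ψ₂ p₁ p₂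
  have hpyth := Real.sin_sq_add_cos_sq θ
  set c := Real.cos θ with hcdef
  set s := Real.sin θ with hsdef
  have hs0 : 0 ≤ s := Real.sin_nonneg_of_nonneg_of_le_pi hθ0
    (by linarith [Real.pi_pos])
  have hc0 : 0 ≤ c := Real.cos_nonneg_of_mem_Icc ⟨by linarith [Real.pi_pos], hθ1⟩
  have hDpos : 0 < 1 + n ^ 2 + 2 * n * c := by nlinarith
  have hDne : (1 + n ^ 2 + 2 * n * c) ≠ 0 := ne_of_gt hDpos
  have hpne : (1 + n * c) ≠ 0 := ne_of_gt hpos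
  have hcos2θ : Real.cos (2 * θ) = 2 * c ^ 2 - 1 := Real.cos_two_mul θ
  have hnum : (1 + 2 * n * c + n ^ 2 * Real.cos (2 * θ)) =
      (1 + n * c) ^ 2 - (n * s) ^ 2 := by rw [hcos2θ]; nlinarith
  have hD : (1 + n ^ 2 + 2 * n * c) = (1 + n * c) ^ 2 + (n * s) ^ 2 := by nlinarith
  have hlb : -1 ≤ (1 + 2 * n * c + n ^ 2 * Real.cos (2 * θ)) /
      (1 + n ^ 2 + 2 * n * c) := by
    rw [le_div_iff₀ hDpos, hnum, hD]; nlinarith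
  have hub : (1 + 2 * n * c + n ^ 2 * Real.cos (2 * θ)) /
      (1 + n ^ 2 + 2 * n * c) ≤ 1 := by
    rw [div_le_one hDpos, hnum, hD]; nlinarith
  have hcosθ₄ : Real.cos θ₄ = ((1 + n * c) ^ 2 - (n * s) ^ 2) /
      (1 + n ^ 2 + 2 * n * c) := by
    rw [show θ₄ = Real.arccos ((1 + 2 * n * c + n ^ 2 * Real.cos (2 * θ)) /
      (1 + n ^ 2 + 2 * n * c)) from rfl, Real.cos_arccos hlb hub, hnum]
  have hθ₄0 : 0 ≤ θ₄ := Real.arccos_nonneg _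
  have hθ₄pi : θ₄ ≤ Real.pi := Real.arccos_le_pi _
  set a := Real.cos (θ₄ / 2) with hadef
  set b := Real.sin (θ₄ / 2) with hbdef
  have ha0 : 0 ≤ a := Real.cos_nonneg_of_mem_Icc
    ⟨by linarith [Real.pi_pos], by linarith⟩
  have hb0 : 0 ≤ b := Real.sin_nonneg_of_nonneg_of_le_pi (by linarith)
    (by linarith [Real.pi_pos])
  have ha2 : a ^ 2 = (1 + n * c) ^ 2 / (1 + n ^ 2 + 2 * n * c) := by
    have h := Real.cos_sq (θ₄ / 2)
    rw [hadef, h, show 2 * (θ₄ / 2) = θ₄ by ring, hcosθ₄, hD]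
    field_simp; ring
  have hb2 : b ^ 2 = (n * s) ^ 2 / (1 + n ^ 2 + 2 * n * c) := by
    have h1 := Real.sin_sq_add_cos_sq (θ₄ / 2)
    have h2 : b ^ 2 = 1 - a ^ 2 := by rw [← h1]; ring
    rw [h2, ha2, hD]; field_simp; ring
  have hab : a * b = (1 + n * c) * (n * s) / (1 + n ^ 2 + 2 * n * c) := by
    have hsq : (a * b) ^ 2 =
        ((1 + n * c) * (n * s) / (1 + n ^ 2 + 2 * n * c)) ^ 2 := by
      rw [mul_pow, ha2, hb2, div_pow]; field_simp
    exact (sq_eq_sq₀ (mul_nonneg ha0 hb0)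
      (div_nonneg (mul_nonneg (le_of_lt hpos) (mul_nonneg hn0 hs0))
        (le_of_lt hDpos))).mp hsq
  have hp2def : p₂ = (1 + n ^ 2 + 2 * n * c) / (2 * (1 + n * c)) := rfl
  have hp1def : p₁ = (1 - n ^ 2) / (2 * (1 + n * c)) := rfl
  have hA : p₂ * a ^ 2 = (1 + n * c) / 2 := by
    rw [ha2, hp2def]; field_simp
  have hB2 : p₂ * b ^ 2 = (n * s) ^ 2 / (2 * (1 + n * c)) := by
    rw [hb2, hp2def]; field_simp
  have hB : p₁ + p₂ * b ^ 2 = (1 - n * c) / 2 := by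
    rw [hB2, hp1def]
    field_simp
    linear_combination n ^ 2 * hpyth
  have hC : p₂ * (a * b) = n * s / 2 := by
    rw [hab, hp2def]; field_simp
  have hp1 : 0 ≤ p₁ := div_nonneg (by nlinarith) (by linarith)
  have hp2 : 0 ≤ p₂ := div_nonneg (le_of_lt hDpos) (by linarith)
  refine ⟨⟨hp1, hp2⟩, ?_, ?_, ?_⟩
  · rw [hp1def, hp2def]; field_simp; ring
  · exact Dm2_mat_eq n θ φ p₁ p₂ a b hA hB hC
  · intro f hsym _ hf10
    have h1 : cohVec ψ₁ = ![1, 0] ∘ Equiv.swap (0 : Fin 2) 1 := by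
      funext i
      fin_cases i <;> simp [cohVec, ψ₁, Equiv.swap_apply_def]
    have h2 : cohVec ψ₂ = ![a ^ 2, b ^ 2] := by
      funext i
      fin_cases i
      · show ‖ψ₂ 0‖ ^ 2 = a ^ 2
        rw [show ψ₂ 0 = ((Real.cos (θ₄ / 2) : ℝ) : ℂ) from rfl,
          Complex.norm_real, Real.norm_eq_abs, sq_abs, hadef]
      · show ‖ψ₂ 1‖ ^ 2 = b ^ 2
        rw [show ψ₂ 1 = Complex.exp (Complex.I * φ) *
            ((Real.sin (θ₄ / 2) : ℝ) : ℂ) from rfl,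
          norm_mul, Complex.norm_real, Real.norm_eq_abs,
          Complex.norm_exp, hbdef]
        simp [sq_abs]
    rw [h1, h2, hsym, hf10]
    ring
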